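/- For any fixed τ > 0, the marginal Horseshoe density π_HS(β|τ) = ∫₀^∞ N(β|0, λ²τ²)·(2/π)(1+λ²)^{-1} dλ is a regularly varying function of β of index 2 in the sense that the associated tail function is regularly varying of index 1; equivalently, for all c > 0, lim_{β→∞} π_HS(cβ|τ)/π_HS(β|τ) = c^{-2}. -/

import Mathlib

open Real Filter Topology Set MeasureTheory

/-- Marginal Horseshoe density
`π_HS(β|τ) = ∫₀^∞ N(β|0, λ²τ²) · C⁺(λ|0,1) dλ`. -/
noncomputable def horseshoePdf (τ β : ℝ) : ℝ :=
  ∫ l in Ioi (0 : ℝ),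
    (2 * π * l ^ 2 * τ ^ 2) ^ (-(1 / 2) : ℝ) * Real.exp (-β ^ 2 / (2 * l ^ 2 * τ ^ 2)) *
      (2 / (π * (1 + l ^ 2)))

noncomputable def hsG : ℝ → ℝ := fun t => if t ≤ 0 then 0 else Real.exp (-(2 * t ^ 2)⁻¹)

lemma hsG_deriv {t : ℝ} (ht : (0:ℝ) < t) :
    HasDerivAt hsG (Real.exp (-(2 * t ^ 2)⁻¹) * (t ^ 3)⁻¹) t := by
  have h0 : (2 * t ^ 2 : ℝ) ≠ 0 := by positivity
  have h1 : HasDerivAt (fun s : ℝ => 2 * s ^ 2) (2 * (2 * t)) t := by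
    simpa using (hasDerivAt_pow 2 t).const_mul 2
  have h2 : HasDerivAt (fun s : ℝ => -(2 * s ^ 2)⁻¹) ((t ^ 3)⁻¹) t := by
    have : HasDerivAt (fun s : ℝ => -(2 * s ^ 2)⁻¹) (-(-(2 * (2 * t)) / (2 * t ^ 2) ^ 2)) t :=
      (h1.inv h0).neg
    convert this using 1
    have ht0 : t ≠ 0 := ht.ne'
    field_simp
  have h3 : HasDerivAt (fun s : ℝ => Real.exp (-(2 * s ^ 2)⁻¹))
      (Real.exp (-(2 * t ^ 2)⁻¹) * (t ^ 3)⁻¹) t := h2.exp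
  apply h3.congr_of_eventuallyEq
  filter_upwards [eventually_gt_nhds ht] with s hs
  simp [hsG, not_le.mpr hs]

lemma hsG_cont : ContinuousWithinAt hsG (Ici (0:ℝ)) 0 := by
  rw [← Set.Ioi_insert]
  rw [continuousWithinAt_insert_self]
  have h0 : hsG 0 = 0 := by simp [hsG]
  unfold ContinuousWithinAt
  rw [h0]
  have h1 : Tendsto (fun t : ℝ => (2 * t ^ 2)⁻¹) (𝓝[>] (0:ℝ)) atTop := by
    apply tendsto_inv_nhdsGT_zero.comp
    rw [tendsto_nhdsWithin_iff]
    constructor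
    · have : Tendsto (fun t : ℝ => 2 * t ^ 2) (𝓝 0) (𝓝 (2 * 0 ^ 2)) :=
        (continuous_const.mul (continuous_pow 2)).tendsto 0
      simpa using this.mono_left nhdsWithin_le_nhds
    · filter_upwards [self_mem_nhdsWithin] with t ht
      have h : (0:ℝ) < t := ht
      exact Set.mem_Ioi.mpr (by positivity)
  have h2 : Tendsto hsG (𝓝[>] (0:ℝ)) (𝓝 0) := by
    have := (Real.tendsto_exp_atBot).comp (tendsto_neg_atTop_atBot.comp h1)
    apply this.congr'
    filter_upwards [self_mem_nhdsWithin] with t ht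
    have : (0:ℝ) < t := ht
    simp [hsG, not_le.mpr this, Function.comp]
  exact h2

lemma hsG_lim : Tendsto hsG atTop (𝓝 1) := by
  have h1 : Tendsto (fun t : ℝ => -(2 * t ^ 2)⁻¹) atTop (𝓝 0) := by
    rw [show (0:ℝ) = -0 by norm_num]
    apply Tendsto.neg
    apply Tendsto.inv_tendsto_atTop
    exact (tendsto_pow_atTop two_ne_zero).const_mul_atTop two_pos
  have h2 := (Real.continuous_exp.tendsto 0).comp h1
  rw [Real.exp_zero] at h2
  apply h2.congr'
  filter_upwards [eventually_gt_atTop 0] with t ht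
  simp [hsG, not_le.mpr ht, Function.comp]

lemma hsG_integrable : IntegrableOn (fun t : ℝ => Real.exp (-(2 * t ^ 2)⁻¹) * (t ^ 3)⁻¹) (Ioi 0) :=
  integrableOn_Ioi_deriv_of_nonneg hsG_cont (fun t ht => hsG_deriv ht)
    (fun t ht => by have h : (0:ℝ) < t := ht; positivity) hsG_lim

lemma hsG_integral : ∫ t in Ioi (0:ℝ), Real.exp (-(2 * t ^ 2)⁻¹) * (t ^ 3)⁻¹ = 1 := by
  rw [integral_Ioi_of_hasDerivAt_of_nonneg hsG_cont (fun t ht => hsG_deriv ht)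
    (fun t ht => by have h : (0:ℝ) < t := ht; positivity) hsG_lim]
  simp [hsG]

lemma hs_key (τ : ℝ) (hτ : 0 < τ) :
    Tendsto (fun β : ℝ => β ^ 2 * horseshoePdf τ β) atTop
      (𝓝 ((Real.sqrt (2 * π))⁻¹ * (2 / (π * τ)) * τ ^ 2)) := by
  have hπ : (0:ℝ) < π := Real.pi_pos
  have hsq : (0:ℝ) < Real.sqrt (2 * π) := Real.sqrt_pos.mpr (by positivity)
  set c2 : ℝ := (Real.sqrt (2 * π))⁻¹ * (2 / (π * τ)) with hc2
  have hc2pos : 0 < c2 := by positivity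
  set H : ℝ → ℝ → ℝ := fun β t =>
    c2 * (t⁻¹ * Real.exp (-(2 * t ^ 2)⁻¹)) * (β ^ 2 / (1 + (β / τ) ^ 2 * t ^ 2)) with hH
  set L : ℝ → ℝ := fun t => c2 * τ ^ 2 * (Real.exp (-(2 * t ^ 2)⁻¹) * (t ^ 3)⁻¹) with hL
  have hDCT : Tendsto (fun β : ℝ => ∫ t in Ioi (0:ℝ), H β t) atTop
      (𝓝 (∫ t in Ioi (0:ℝ), L t)) := by
    apply tendsto_integral_filter_of_dominated_convergence L
    · filter_upwards with β
      apply Measurable.aestronglyMeasurable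
      fun_prop
    · filter_upwards [eventually_ge_atTop (1:ℝ)] with β hβ
      rw [ae_restrict_iff' measurableSet_Ioi]
      apply ae_of_all
      intro t ht
      have ht' : (0:ℝ) < t := ht
      have hβ0 : (0:ℝ) < β := lt_of_lt_of_le one_pos hβ
      rw [Real.norm_eq_abs, abs_of_nonneg (by positivity)]
      have step : β ^ 2 / (1 + (β / τ) ^ 2 * t ^ 2) ≤ τ ^ 2 / t ^ 2 := by
        have h1 : β ^ 2 / (1 + (β / τ) ^ 2 * t ^ 2) ≤ β ^ 2 / ((β / τ) ^ 2 * t ^ 2) := by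
          gcongr
          linarith
        have h2 : β ^ 2 / ((β / τ) ^ 2 * t ^ 2) = τ ^ 2 / t ^ 2 := by
          field_simp
        linarith
      calc c2 * (t⁻¹ * Real.exp (-(2 * t ^ 2)⁻¹)) * (β ^ 2 / (1 + (β / τ) ^ 2 * t ^ 2))
          ≤ c2 * (t⁻¹ * Real.exp (-(2 * t ^ 2)⁻¹)) * (τ ^ 2 / t ^ 2) :=
            mul_le_mul_of_nonneg_left step (by positivity)
        _ = L t := by rw [hL]; field_simp
    · exact hsG_integrable.const_mul _
    · rw [ae_restrict_iff' measurableSet_Ioi]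
      apply ae_of_all
      intro t ht
      have ht' : (0:ℝ) < t := ht
      have key : Tendsto (fun β : ℝ => β ^ 2 / (1 + (β / τ) ^ 2 * t ^ 2)) atTop
          (𝓝 (τ ^ 2 / t ^ 2)) := by
        have h1 : Tendsto (fun β : ℝ => (β ^ 2)⁻¹ + t ^ 2 / τ ^ 2) atTop
            (𝓝 (0 + t ^ 2 / τ ^ 2)) := by
          apply Tendsto.add_const
          exact Tendsto.inv_tendsto_atTop (tendsto_pow_atTop two_ne_zero)
        have h2 := h1.inv₀ (by positivity)
        have h3 : ((0:ℝ) + t ^ 2 / τ ^ 2)⁻¹ = τ ^ 2 / t ^ 2 := by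
          rw [zero_add, inv_div]
        rw [h3] at h2
        apply h2.congr'
        filter_upwards [eventually_ge_atTop (1:ℝ)] with β hβ
        have hβ0 : (0:ℝ) < β := lt_of_lt_of_le one_pos hβ
        field_simp
      have h4 := key.const_mul (c2 * (t⁻¹ * Real.exp (-(2 * t ^ 2)⁻¹)))
      have h5 : c2 * (t⁻¹ * Real.exp (-(2 * t ^ 2)⁻¹)) * (τ ^ 2 / t ^ 2) = L t := by
        rw [hL]; field_simp
      rw [h5] at h4
      exact h4
  have hLval : ∫ t in Ioi (0:ℝ), L t = c2 * τ ^ 2 := by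
    rw [hL, MeasureTheory.integral_const_mul, hsG_integral, mul_one]
  rw [hLval] at hDCT
  apply hDCT.congr'
  filter_upwards [eventually_gt_atTop (0:ℝ)] with β hβ
  have hb : (0:ℝ) < β / τ := by positivity
  have sub := integral_comp_mul_left_Ioi
    (fun l => (2 * π * l ^ 2 * τ ^ 2) ^ (-(1 / 2) : ℝ) * Real.exp (-β ^ 2 / (2 * l ^ 2 * τ ^ 2)) *
      (2 / (π * (1 + l ^ 2)))) 0 hb
  rw [mul_zero, smul_eq_mul] at sub
  calc ∫ t in Ioi (0:ℝ), H β t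
      = ∫ t in Ioi (0:ℝ), (β ^ 2 * (β / τ)) *
          ((2 * π * ((β / τ) * t) ^ 2 * τ ^ 2) ^ (-(1 / 2) : ℝ) *
            Real.exp (-β ^ 2 / (2 * ((β / τ) * t) ^ 2 * τ ^ 2)) *
            (2 / (π * (1 + ((β / τ) * t) ^ 2)))) := by
        apply setIntegral_congr_fun measurableSet_Ioi
        intro t ht
        have ht' : (0:ℝ) < t := ht
        have e1 : 2 * π * ((β / τ) * t) ^ 2 * τ ^ 2 = (Real.sqrt (2 * π) * (β * t)) ^ 2 := by
          conv_rhs => rw [mul_pow, Real.sq_sqrt (by positivity : (0:ℝ) ≤ 2 * π)]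
          field_simp
        have e2 : ((Real.sqrt (2 * π) * (β * t)) ^ 2 : ℝ) ^ (-(1 / 2) : ℝ)
            = (Real.sqrt (2 * π) * (β * t))⁻¹ := by
          rw [← Real.rpow_natCast (Real.sqrt (2 * π) * (β * t)) 2,
            ← Real.rpow_mul (by positivity)]
          norm_num [Real.rpow_neg_one, mul_inv]
        have e3 : -β ^ 2 / (2 * ((β / τ) * t) ^ 2 * τ ^ 2) = -(2 * t ^ 2)⁻¹ := by
          field_simp
        dsimp only
        rw [e1, e2, e3, hH, hc2]
        have h6 : (0:ℝ) < 1 + (β / τ) ^ 2 * t ^ 2 := by positivity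
        have h7 : (0:ℝ) < 1 + ((β / τ) * t) ^ 2 := by positivity
        field_simp
    _ = (β ^ 2 * (β / τ)) * ∫ t in Ioi (0:ℝ),
          ((2 * π * ((β / τ) * t) ^ 2 * τ ^ 2) ^ (-(1 / 2) : ℝ) *
            Real.exp (-β ^ 2 / (2 * ((β / τ) * t) ^ 2 * τ ^ 2)) *
            (2 / (π * (1 + ((β / τ) * t) ^ 2)))) := MeasureTheory.integral_const_mul _ _
    _ = β ^ 2 * horseshoePdf τ β := by
        rw [sub, horseshoePdf]
        field_simp

/-- For any fixed `τ > 0`, the marginal Horseshoe density is regularly varying of index 2: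
`π_HS(cβ|τ)/π_HS(β|τ) → c⁻²` as `β → ∞`, for all `c > 0`. -/
theorem horseshoe_density_regularly_varying (τ : ℝ) (hτ : 0 < τ) :
    ∀ c : ℝ, 0 < c →
      Tendsto (fun β : ℝ => horseshoePdf τ (c * β) / horseshoePdf τ β)
        atTop (nhds (c ^ (-2 : ℝ))) := by
  intro c hc
  have hπ : (0:ℝ) < π := Real.pi_pos
  have hsq : (0:ℝ) < Real.sqrt (2 * π) := Real.sqrt_pos.mpr (by positivity)
  have hK : (0:ℝ) < (Real.sqrt (2 * π))⁻¹ * (2 / (π * τ)) * τ ^ 2 := by positivity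
  have h1 := hs_key τ hτ
  have hcm : Tendsto (fun β : ℝ => c * β) atTop atTop :=
    Tendsto.const_mul_atTop hc tendsto_id
  have h2 : Tendsto (fun β : ℝ => (c * β) ^ 2 * horseshoePdf τ (c * β)) atTop
      (𝓝 ((Real.sqrt (2 * π))⁻¹ * (2 / (π * τ)) * τ ^ 2)) := h1.comp hcm
  have h3 := h2.div h1 (ne_of_gt hK)
  rw [div_self (ne_of_gt hK)] at h3
  have h4 := h3.mul_const (c ^ (-2 : ℝ))
  rw [one_mul] at h4
  apply h4.congr'
  filter_upwards [eventually_gt_atTop (0:ℝ)] with β hβ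
  have hc2 : c ^ (-2 : ℝ) = (c ^ 2)⁻¹ := by
    rw [Real.rpow_neg hc.le, show ((2:ℝ) = ((2:ℕ):ℝ)) by norm_num, Real.rpow_natCast]
  rcases eq_or_ne (horseshoePdf τ β) 0 with h | h
  · simp [h]
  · rw [hc2]
    simp only [Pi.div_apply]
    field_simp
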